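/- If every Pauli string appearing in the expansion of a traceless Hamiltonian H = Σ_X Σ_μ J_X^μ ⊗_{j∈X} σ_j^{μ_j} has support X with diameter D(X) < N/4, then the expectation value ⟨EAP| H |EAP⟩ = 0 for any entangled antipodal pair state |EAP⟩. -/

import Mathlib

open Matrix Finset
open scoped Kronecker

noncomputable section

/-- Pauli X. -/
def σx : Matrix (Fin 2) (Fin 2) ℂ := !![0, 1; 1, 0]
/-- Pauli Y. -/
def σy : Matrix (Fin 2) (Fin 2) ℂ := !![0, -Complex.I; Complex.I, 0]
/-- Pauli Z. -/
def σz : Matrix (Fin 2) (Fin 2) ℂ := !![1, 0; 0, -1]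

/-- Pauli matrices indexed by `0 = x`, `1 = y`, `2 = z`. -/
def pauli : Fin 3 → Matrix (Fin 2) (Fin 2) ℂ := ![σx, σy, σz]

/-- The Bell state `|Φ_{pq}⟩ = (|0⟩|p⟩ + (-1)^q |1⟩|p̄⟩)/√2` on two qubits. -/
def bell (p q : Fin 2) : Fin 2 × Fin 2 → ℂ := fun ab =>
  ((if ab = (0, p) then 1 else 0) +
    (if ab = (1, p + 1) then ((-1 : ℂ)) ^ (q : ℕ) else 0)) / (Real.sqrt 2 : ℂ)

/-- Signs `ω^x = (-1)^q`, `ω^y = -ω^x ω^z`, `ω^z = (-1)^p`, indexed by `0 = x`, `1 = y`, `2 = z`. -/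
def omegaSign (p q : Fin 2) : Fin 3 → ℂ :=
  ![((-1 : ℂ)) ^ (q : ℕ), -(((-1 : ℂ)) ^ (q : ℕ) * ((-1 : ℂ)) ^ (p : ℕ)),
    ((-1 : ℂ)) ^ (p : ℕ)]

/-- Spin configurations of the cyclic chain `Λ = ℤ/N`. -/
abbrev Cfg (N : ℕ) := ZMod N → Fin 2

/-- The single-site operator `σ_j^A` (acting as `A` on site `j` and identity elsewhere). -/
def pauliAt (N : ℕ) [NeZero N] (j : ZMod N) (A : Matrix (Fin 2) (Fin 2) ℂ) :
    Matrix (Cfg N) (Cfg N) ℂ :=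
  Matrix.of fun c c' => if ∀ i, i ≠ j → c i = c' i then A (c j) (c' j) else 0

/-- The Pauli string `⊗_{j∈X} σ_j^{μ_j}`. -/
def pauliString (N : ℕ) [NeZero N] (X : Finset (ZMod N)) (μ : ZMod N → Fin 3) :
    Matrix (Cfg N) (Cfg N) ℂ :=
  Matrix.of fun c c' =>
    (∏ j ∈ X, pauli (μ j) (c j) (c' j)) * (if ∀ i, i ∉ X → c i = c' i then 1 else 0)

/-- The entangled antipodal pair state `⊗_{j=0}^{M-1} |Φ_{p_j q_j}⟩_{j, j+M}` on a chain
of length `N = 2M`, as an amplitude function on configurations. -/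
def eapState (N M : ℕ) [NeZero N] (p q : ZMod N → Fin 2) : Cfg N → ℂ :=
  fun c => ∏ j ∈ Finset.range M,
    bell (p (j : ZMod N)) (q (j : ZMod N)) (c (j : ZMod N), c ((j : ZMod N) + (M : ZMod N)))

/-- Diameter of a subset of the cycle `ℤ/N` (maximal cyclic distance between two points). -/
def diam (N : ℕ) [NeZero N] (X : Finset (ZMod N)) : ℕ :=
  X.sup fun a => X.sup fun b => min (a - b).val (b - a).val

/-- A Hamiltonian expanded in the Pauli string basis,
`H = Σ_X Σ_μ J_X^μ ⊗_{j∈X} σ_j^{μ_j}`, with real coefficients `J`. -/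
def ham (N : ℕ) [NeZero N] (J : Finset (ZMod N) → (ZMod N → Fin 3) → ℝ) :
    Matrix (Cfg N) (Cfg N) ℂ :=
  ∑ X : Finset (ZMod N), ∑ μ : ZMod N → Fin 3, (J X μ : ℂ) • pauliString N X μ


section Pairing
variable {N M : ℕ}

def pairFun (M N : ℕ) : Fin M × Fin 2 → ZMod N :=
  fun js => (((js.1 : ℕ) + (js.2 : ℕ) * M : ℕ) : ZMod N)

lemma pairFun_val [NeZero N] (hN : N = 2*M) (js : Fin M × Fin 2) :
    (pairFun M N js).val = (js.1 : ℕ) + (js.2 : ℕ) * M := by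
  apply ZMod.val_cast_of_lt
  have h1 := js.1.isLt
  have h2 : (js.2 : ℕ) * M ≤ 1 * M := Nat.mul_le_mul_right M (by omega)
  omega

lemma pairFun_bij [NeZero N] (hN : N = 2*M) : Function.Bijective (pairFun M N) := by
  rw [Fintype.bijective_iff_injective_and_card]
  constructor
  · rintro ⟨j1, s1⟩ ⟨j2, s2⟩ h
    have hv := congrArg ZMod.val h
    rw [pairFun_val hN, pairFun_val hN] at hv
    simp only at hv
    have h1 := j1.isLt
    have h2 := j2.isLt
    fin_cases s1 <;> fin_cases s2 <;>
      simp_all [Prod.ext_iff, Fin.ext_iff] <;> omega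
  · simp [ZMod.card]; omega

lemma pairFun_zero (j : Fin M) : pairFun M N (j, 0) = ((j : ℕ) : ZMod N) := by
  simp [pairFun]

lemma pairFun_one (j : Fin M) :
    pairFun M N (j, 1) = ((j : ℕ) : ZMod N) + (M : ZMod N) := by
  simp [pairFun]

lemma prod_zmod_pair [NeZero N] (hN : N = 2*M) (G : ZMod N → ℂ) :
    ∏ i : ZMod N, G i
      = ∏ j : Fin M, (G ((j : ℕ) : ZMod N) * G (((j : ℕ) : ZMod N) + (M : ZMod N))) := by
  rw [← Function.Bijective.prod_comp (pairFun_bij hN) G, Fintype.prod_prod_type]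
  refine Finset.prod_congr rfl fun j _ => ?_
  rw [Fin.prod_univ_two, pairFun_zero, pairFun_one]

def cfgPair (M N : ℕ) [NeZero N] (c : Cfg N) : Fin M → Fin 2 × Fin 2 :=
  fun j => (c ((j : ℕ) : ZMod N), c (((j : ℕ) : ZMod N) + (M : ZMod N)))

lemma cfgPair_bij [NeZero N] (hN : N = 2*M) : Function.Bijective (cfgPair M N) := by
  rw [Fintype.bijective_iff_injective_and_card]
  constructor
  · intro c c' h
    funext i
    obtain ⟨⟨j, s⟩, rfl⟩ := (pairFun_bij hN).2 i
    have hj := congrFun h j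
    simp only [cfgPair, Prod.ext_iff] at hj
    fin_cases s
    · show c (pairFun M N (j, 0)) = c' (pairFun M N (j, 0))
      rw [pairFun_zero]; exact hj.1
    · show c (pairFun M N (j, 1)) = c' (pairFun M N (j, 1))
      rw [pairFun_one]; exact hj.2
  · simp [Fintype.card_fun, ZMod.card, hN, pow_mul]

lemma sum_factor [NeZero N] (hN : N = 2*M) (F : Fin M → Fin 2 × Fin 2 → ℂ) :
    ∑ c : Cfg N, ∏ j : Fin M, F j (cfgPair M N c j)
      = ∏ j : Fin M, ∑ ab : Fin 2 × Fin 2, F j ab := by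
  rw [Finset.prod_univ_sum, Fintype.piFinset_univ,
    ← Function.Bijective.sum_comp (cfgPair_bij hN) (fun g => ∏ j : Fin M, F j (g j))]

end Pairing

section StringFact
variable {N M : ℕ}

/-- entrywise local factor -/
lemma pauliString_apply_eq [NeZero N] (hN : N = 2*M) (X : Finset (ZMod N))
    (μ : ZMod N → Fin 3) (c c' : Cfg N) :
    pauliString N X μ c c'
      = ∏ j : Fin M,
          ((if ((j : ℕ) : ZMod N) ∈ X then pauli (μ ((j : ℕ) : ZMod N)) else 1)
              (c ((j : ℕ) : ZMod N)) (c' ((j : ℕ) : ZMod N))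
            * (if ((j : ℕ) : ZMod N) + (M : ZMod N) ∈ X
                then pauli (μ (((j : ℕ) : ZMod N) + (M : ZMod N))) else 1)
              (c (((j : ℕ) : ZMod N) + (M : ZMod N)))
              (c' (((j : ℕ) : ZMod N) + (M : ZMod N)))) := by
  have key : pauliString N X μ c c'
      = ∏ i : ZMod N, (if i ∈ X then pauli (μ i) else 1) (c i) (c' i) := by
    rw [← Finset.prod_mul_prod_compl X (fun i => (if i ∈ X then pauli (μ i) else 1) (c i) (c' i))]
    have h1 : ∏ i ∈ X, (if i ∈ X then pauli (μ i) else 1) (c i) (c' i)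
        = ∏ i ∈ X, pauli (μ i) (c i) (c' i) :=
      Finset.prod_congr rfl fun i hi => by rw [if_pos hi]
    have h2 : ∏ i ∈ Xᶜ, (if i ∈ X then pauli (μ i) else 1) (c i) (c' i)
        = if ∀ i, i ∉ X → c i = c' i then 1 else 0 := by
      have : ∏ i ∈ Xᶜ, (if i ∈ X then pauli (μ i) else 1) (c i) (c' i)
          = ∏ i ∈ Xᶜ, if c i = c' i then 1 else 0 :=
        Finset.prod_congr rfl fun i hi => by
          rw [Finset.mem_compl] at hi
          rw [if_neg hi, Matrix.one_apply]
      rw [this, Finset.prod_boole]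
      congr 1
      simp only [Finset.mem_compl, eq_iff_iff]
    rw [h1, h2]
    rfl
  rw [key, prod_zmod_pair hN]

end StringFact

section ZeroLemmas

lemma bellA_zero (ν : Fin 3) (P Q : Fin 2) :
    ∑ ab : Fin 2 × Fin 2, ∑ xy : Fin 2 × Fin 2,
      (starRingEnd ℂ) (bell P Q ab) * pauli ν ab.1 xy.1
        * (1 : Matrix (Fin 2) (Fin 2) ℂ) ab.2 xy.2 * bell P Q xy = 0 := by
  fin_cases ν <;> fin_cases P <;> fin_cases Q <;>
    simp [Fintype.sum_prod_type, Fin.sum_univ_two, bell, pauli, σx, σy, σz,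
      Matrix.one_apply, Prod.ext_iff, div_eq_mul_inv, _root_.map_mul]

lemma bellB_zero (ν : Fin 3) (P Q : Fin 2) :
    ∑ ab : Fin 2 × Fin 2, ∑ xy : Fin 2 × Fin 2,
      (starRingEnd ℂ) (bell P Q ab) * (1 : Matrix (Fin 2) (Fin 2) ℂ) ab.1 xy.1
        * pauli ν ab.2 xy.2 * bell P Q xy = 0 := by
  fin_cases ν <;> fin_cases P <;> fin_cases Q <;>
    simp [Fintype.sum_prod_type, Fin.sum_univ_two, bell, pauli, σx, σy, σz,
      Matrix.one_apply, Prod.ext_iff, div_eq_mul_inv, _root_.map_mul]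

end ZeroLemmas

section Main
set_option maxHeartbeats 1000000
variable {N M : ℕ}

lemma exp_factor [NeZero N] (hN : N = 2*M) (p q : ZMod N → Fin 2)
    (X : Finset (ZMod N)) (μ : ZMod N → Fin 3) :
    dotProduct (star (eapState N M p q)) ((pauliString N X μ).mulVec (eapState N M p q))
      = ∏ j : Fin M, ∑ ab : Fin 2 × Fin 2, ∑ xy : Fin 2 × Fin 2,
          (starRingEnd ℂ) (bell (p ((j : ℕ) : ZMod N)) (q ((j : ℕ) : ZMod N)) ab)
            * (if ((j : ℕ) : ZMod N) ∈ X then pauli (μ ((j : ℕ) : ZMod N)) else 1) ab.1 xy.1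
            * (if ((j : ℕ) : ZMod N) + (M : ZMod N) ∈ X
                then pauli (μ (((j : ℕ) : ZMod N) + (M : ZMod N))) else 1) ab.2 xy.2
            * bell (p ((j : ℕ) : ZMod N)) (q ((j : ℕ) : ZMod N)) xy := by
  set v := eapState N M p q with hvdef
  have hv : ∀ c : Cfg N, v c
      = ∏ j : Fin M, bell (p ((j : ℕ) : ZMod N)) (q ((j : ℕ) : ZMod N)) (cfgPair M N c j) := by
    intro c
    rw [hvdef]
    exact (Fin.prod_univ_eq_prod_range
      (fun j : ℕ => bell (p (j : ZMod N)) (q (j : ZMod N))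
        (c (j : ZMod N), c ((j : ZMod N) + (M : ZMod N)))) M).symm
  have step1 : dotProduct (star v) ((pauliString N X μ).mulVec v)
      = ∑ c : Cfg N, ∑ c' : Cfg N,
          (starRingEnd ℂ) (v c) * (pauliString N X μ c c' * v c') := by
    simp only [dotProduct, Matrix.mulVec, Pi.star_apply, RCLike.star_def, Finset.mul_sum]
  rw [step1]
  have step2 : ∀ c c' : Cfg N,
      (starRingEnd ℂ) (v c) * (pauliString N X μ c c' * v c')
        = ∏ j : Fin M,
            ((starRingEnd ℂ) (bell (p ((j : ℕ) : ZMod N)) (q ((j : ℕ) : ZMod N)) (cfgPair M N c j))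
              * (if ((j : ℕ) : ZMod N) ∈ X then pauli (μ ((j : ℕ) : ZMod N)) else 1)
                  (cfgPair M N c j).1 (cfgPair M N c' j).1
              * (if ((j : ℕ) : ZMod N) + (M : ZMod N) ∈ X
                  then pauli (μ (((j : ℕ) : ZMod N) + (M : ZMod N))) else 1)
                  (cfgPair M N c j).2 (cfgPair M N c' j).2
              * bell (p ((j : ℕ) : ZMod N)) (q ((j : ℕ) : ZMod N)) (cfgPair M N c' j)) := by
    intro c c'
    rw [hv c, hv c', pauliString_apply_eq hN X μ c c', map_prod,
      ← Finset.prod_mul_distrib, ← Finset.prod_mul_distrib]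
    exact Finset.prod_congr rfl fun j _ => by simp only [cfgPair]; ring
  simp only [step2]
  rw [show (∑ c : Cfg N, ∑ c' : Cfg N,
      ∏ j : Fin M, ((starRingEnd ℂ) (bell (p ((j : ℕ) : ZMod N)) (q ((j : ℕ) : ZMod N)) (cfgPair M N c j))
        * (if ((j : ℕ) : ZMod N) ∈ X then pauli (μ ((j : ℕ) : ZMod N)) else 1)
            (cfgPair M N c j).1 (cfgPair M N c' j).1
        * (if ((j : ℕ) : ZMod N) + (M : ZMod N) ∈ X
            then pauli (μ (((j : ℕ) : ZMod N) + (M : ZMod N))) else 1)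
            (cfgPair M N c j).2 (cfgPair M N c' j).2
        * bell (p ((j : ℕ) : ZMod N)) (q ((j : ℕ) : ZMod N)) (cfgPair M N c' j)))
    = ∑ c : Cfg N, ∏ j : Fin M, ∑ xy : Fin 2 × Fin 2,
        ((starRingEnd ℂ) (bell (p ((j : ℕ) : ZMod N)) (q ((j : ℕ) : ZMod N)) (cfgPair M N c j))
          * (if ((j : ℕ) : ZMod N) ∈ X then pauli (μ ((j : ℕ) : ZMod N)) else 1)
              (cfgPair M N c j).1 xy.1
          * (if ((j : ℕ) : ZMod N) + (M : ZMod N) ∈ X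
              then pauli (μ (((j : ℕ) : ZMod N) + (M : ZMod N))) else 1)
              (cfgPair M N c j).2 xy.2
          * bell (p ((j : ℕ) : ZMod N)) (q ((j : ℕ) : ZMod N)) xy) from
    Finset.sum_congr rfl fun c _ => sum_factor hN
      (fun j xy =>
        (starRingEnd ℂ) (bell (p ((j : ℕ) : ZMod N)) (q ((j : ℕ) : ZMod N)) (cfgPair M N c j))
          * (if ((j : ℕ) : ZMod N) ∈ X then pauli (μ ((j : ℕ) : ZMod N)) else 1)
              (cfgPair M N c j).1 xy.1
          * (if ((j : ℕ) : ZMod N) + (M : ZMod N) ∈ X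
              then pauli (μ (((j : ℕ) : ZMod N) + (M : ZMod N))) else 1)
              (cfgPair M N c j).2 xy.2
          * bell (p ((j : ℕ) : ZMod N)) (q ((j : ℕ) : ZMod N)) xy)]
  exact sum_factor hN
    (fun j ab => ∑ xy : Fin 2 × Fin 2,
      (starRingEnd ℂ) (bell (p ((j : ℕ) : ZMod N)) (q ((j : ℕ) : ZMod N)) ab)
        * (if ((j : ℕ) : ZMod N) ∈ X then pauli (μ ((j : ℕ) : ZMod N)) else 1) ab.1 xy.1
        * (if ((j : ℕ) : ZMod N) + (M : ZMod N) ∈ X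
            then pauli (μ (((j : ℕ) : ZMod N) + (M : ZMod N))) else 1) ab.2 xy.2
        * bell (p ((j : ℕ) : ZMod N)) (q ((j : ℕ) : ZMod N)) xy)

lemma string_exp_zero [NeZero N] (hN : N = 2*M) (p q : ZMod N → Fin 2)
    (X : Finset (ZMod N)) (μ : ZMod N → Fin 3) (hX : X.Nonempty)
    (hA : ∀ i ∈ X, i + (M : ZMod N) ∉ X) :
    dotProduct (star (eapState N M p q)) ((pauliString N X μ).mulVec (eapState N M p q)) = 0 := by
  have hMM : (M : ZMod N) + (M : ZMod N) = 0 := by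
    rw [← Nat.cast_add]
    have : M + M = N := by omega
    rw [this, ZMod.natCast_self]
  rw [exp_factor hN p q X μ]
  obtain ⟨i₀, hi₀⟩ := hX
  obtain ⟨⟨j₀, s⟩, rfl⟩ := (pairFun_bij hN).2 i₀
  apply Finset.prod_eq_zero (Finset.mem_univ j₀)
  fin_cases s
  · replace hi₀ : pairFun M N (j₀, 0) ∈ X := hi₀
    rw [pairFun_zero j₀] at hi₀
    have h2 : ((j₀ : ℕ) : ZMod N) + (M : ZMod N) ∉ X := hA _ hi₀
    simp only [if_pos hi₀, if_neg h2]
    exact bellA_zero _ _ _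
  · replace hi₀ : pairFun M N (j₀, 1) ∈ X := hi₀
    rw [pairFun_one j₀] at hi₀
    have h2 : ((j₀ : ℕ) : ZMod N) ∉ X := by
      have := hA _ hi₀
      rwa [add_assoc, hMM, add_zero] at this
    simp only [if_pos hi₀, if_neg h2]
    exact bellB_zero _ _ _

end Main

section Final
set_option maxHeartbeats 1000000
variable {N : ℕ}

lemma my_sum_mulVec {ι : Type*} [NeZero N] (s : Finset ι)
    (f : ι → Matrix (Cfg N) (Cfg N) ℂ) (v : Cfg N → ℂ) :
    (∑ i ∈ s, f i).mulVec v = ∑ i ∈ s, (f i).mulVec v := by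
  classical
  induction s using Finset.induction_on with
  | empty => ext c; simp [Matrix.mulVec, dotProduct]
  | insert _ _ hni ih => rw [Finset.sum_insert hni, Finset.sum_insert hni, Matrix.add_mulVec, ih]

lemma my_dot_sum {ι : Type*} [NeZero N] (s : Finset ι)
    (w : Cfg N → ℂ) (u : ι → Cfg N → ℂ) :
    dotProduct w (∑ i ∈ s, u i) = ∑ i ∈ s, dotProduct w (u i) := by
  classical
  induction s using Finset.induction_on with
  | empty => simp [dotProduct]
  | insert _ _ hni ih => rw [Finset.sum_insert hni, Finset.sum_insert hni, dotProduct_add, ih]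

end Final

theorem eap_ham_expectation_zero' (N M : ℕ) [NeZero N] (hN : N = 2 * M)
    (p q : ZMod N → Fin 2)
    (J : Finset (ZMod N) → (ZMod N → Fin 3) → ℝ)
    (hJ : ∀ X μ, J X μ ≠ 0 → X.Nonempty ∧ 4 * diam N X < N) :
    dotProduct (star (eapState N M p q)) ((ham N J).mulVec (eapState N M p q)) = 0 := by
  set v := eapState N M p q
  rw [ham, my_sum_mulVec, my_dot_sum]
  refine Finset.sum_eq_zero fun X _ => ?_
  rw [my_sum_mulVec, my_dot_sum]
  refine Finset.sum_eq_zero fun μ _ => ?_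
  by_cases hJ0 : J X μ = 0
  · simp [hJ0]
  obtain ⟨hXne, hdiam⟩ := hJ X μ hJ0
  have hM0 : M ≠ 0 := by
    have := NeZero.ne N; omega
  have hA : ∀ i ∈ X, i + (M : ZMod N) ∉ X := by
    intro i hi hcon
    have hvalM : ((M : ZMod N)).val = M := ZMod.val_cast_of_lt (by omega)
    have hMne : (M : ZMod N) ≠ 0 := by
      intro h; rw [h, ZMod.val_zero] at hvalM; omega
    have h1 : (i + (M : ZMod N) - i).val = M := by
      rw [add_sub_cancel_left, hvalM]
    have h2 : (i - (i + (M : ZMod N))).val = M := by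
      have : i - (i + (M : ZMod N)) = -(M : ZMod N) := by ring
      rw [this, ZMod.neg_val, if_neg hMne, hvalM]
      omega
    have hle : M ≤ diam N X := by
      have step1 : min (i - (i + (M : ZMod N))).val ((i + (M : ZMod N)) - i).val
          ≤ X.sup fun b => min (i - b).val (b - i).val :=
        Finset.le_sup (f := fun b => min (i - b).val (b - i).val) hcon
      have step2 : (X.sup fun b => min (i - b).val (b - i).val) ≤ diam N X :=
        Finset.le_sup (f := fun a => X.sup fun b => min (a - b).val (b - a).val) hi
      rw [h1, h2, min_self] at step1
      exact le_trans step1 step2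
    omega
  rw [Matrix.smul_mulVec, dotProduct_smul, string_exp_zero hN p q X μ hXne hA, smul_zero]

/-- If every Pauli string appearing in a traceless Hamiltonian has support of diameter
`< N/4`, then `⟨EAP|H|EAP⟩ = 0` for every EAP state. -/
theorem eap_ham_expectation_zero (N M : ℕ) [NeZero N] (hN : N = 2 * M)
    (p q : ZMod N → Fin 2)
    (hp : ∀ j : ZMod N, p (j + (M : ZMod N)) = p j)
    (hq : ∀ j : ZMod N, q (j + (M : ZMod N)) = q j)
    (J : Finset (ZMod N) → (ZMod N → Fin 3) → ℝ)
    (hJ : ∀ X μ, J X μ ≠ 0 → X.Nonempty ∧ 4 * diam N X < N) :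
    dotProduct (star (eapState N M p q)) ((ham N J).mulVec (eapState N M p q)) = 0 :=
  eap_ham_expectation_zero' N M hN p q J hJ
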